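/- The pair K_n = ( [[0,J_n(0)],[-J_n(0)ᵀ,0]], [[0,I_n],[-I_n,0]] ) is equivalent to the direct sum (J_n(0), I_n) ⊕ (J_n(0)ᵀ, I_n). -/

import Mathlib

open Matrix

/-- The `n × n` lower Jordan block with `lam` on the diagonal and `1` on the subdiagonal. -/
def jordanBlock {F : Type*} [Field F] (n : ℕ) (lam : F) : Matrix (Fin n) (Fin n) F :=
  Matrix.of fun i j => if i = j then lam else if (i : ℕ) = (j : ℕ) + 1 then 1 else 0

theorem Kn_pair_equivalent_to_directSum {F : Type*} [Field F] {n : ℕ} :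
    ∃ R S : Matrix (Fin n ⊕ Fin n) (Fin n ⊕ Fin n) F, IsUnit R ∧ IsUnit S ∧
      R * (fromBlocks 0 (jordanBlock n 0) (-(jordanBlock n 0)ᵀ) 0) * S =
        fromBlocks (jordanBlock n 0) 0 0 (jordanBlock n 0)ᵀ ∧
      R * (fromBlocks 0 1 (-1) 0) * S = 1 := by
  refine ⟨fromBlocks 1 0 0 (-1), fromBlocks 0 1 1 0, ?_, ?_, ?_, ?_⟩
  · exact (Matrix.isUnit_iff_isUnit_det _).mpr <| Matrix.isUnit_det_of_right_inverse (show (fromBlocks 1 0 0 (-1) : Matrix (Fin n ⊕ Fin n) (Fin n ⊕ Fin n) F) * fromBlocks 1 0 0 (-1) = 1 by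
      rw [fromBlocks_multiply]; simp [← fromBlocks_one])
  · exact (Matrix.isUnit_iff_isUnit_det _).mpr <| Matrix.isUnit_det_of_right_inverse (show (fromBlocks 0 1 1 0 : Matrix (Fin n ⊕ Fin n) (Fin n ⊕ Fin n) F) * fromBlocks 0 1 1 0 = 1 by
      rw [fromBlocks_multiply]; simp [← fromBlocks_one])
  · simp [fromBlocks_multiply]
  · simp [fromBlocks_multiply, ← fromBlocks_one]
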